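/- Let $\mathscr{I}_U$ be a symmetric positive-definite $d \times d$ matrix satisfying $\mathscr{I}_U \bm{\theta} = \mathbf{1}_d$ for some $\bm{\theta} \in \Delta^{d-1}$. Define $\mathscr{I}_C = \mathscr{I}_U - \mathbf{1}_d \mathbf{1}_d^T$ and $\mathscr{I}_C^{+} = \mathscr{I}_U^{-1} - \bm{\theta}\bm{\theta}^T$. Then $\mathscr{I}_C^{+} \mathscr{I}_C \mathscr{I}_C^{+} = \mathscr{I}_C^{+}$, i.e., $\mathscr{I}_C^{+}$ is a generalized inverse of $\mathscr{I}_C$ in the reflexive sense. -/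
import Mathlib

open Matrix BigOperators Finset

lemma my_mul_vecMulVec {d : ℕ} (A : Matrix (Fin d) (Fin d) ℝ) (u v : Fin d → ℝ) :
    A * Matrix.vecMulVec u v = Matrix.vecMulVec (A *ᵥ u) v := by
  ext i j
  simp [Matrix.mul_apply, Matrix.vecMulVec, Matrix.mulVec, dotProduct,
    Finset.sum_mul, mul_assoc]

lemma my_vecMulVec_mul {d : ℕ} (A : Matrix (Fin d) (Fin d) ℝ) (u v : Fin d → ℝ) :
    Matrix.vecMulVec u v * A = Matrix.vecMulVec u (v ᵥ* A) := by
  ext i j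
  simp [Matrix.mul_apply, Matrix.vecMulVec, Matrix.vecMul, dotProduct,
    Finset.mul_sum, mul_assoc]

/-- if `𝓘_U` is symmetric positive-definite with `𝓘_U θ = 1`
for `θ` in the probability simplex, then `𝓘_C⁺ = 𝓘_U⁻¹ - θθᵀ` is a reflexive
generalized inverse of `𝓘_C = 𝓘_U - 11ᵀ`: `𝓘_C⁺ 𝓘_C 𝓘_C⁺ = 𝓘_C⁺`. -/
theorem constrained_fisher_reflexive_ginverse (d : ℕ)
    (IU : Matrix (Fin d) (Fin d) ℝ) (hIU : IU.PosDef)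
    (θ : Fin d → ℝ) (hθnn : ∀ x, 0 ≤ θ x) (hθsum : ∑ x, θ x = 1)
    (hIUθ : IU *ᵥ θ = fun _ => (1 : ℝ))
    (IC ICp : Matrix (Fin d) (Fin d) ℝ)
    (hIC : IC = IU - Matrix.of fun _ _ => (1 : ℝ))
    (hICp : ICp = IU⁻¹ - Matrix.vecMulVec θ θ) :
    ICp * IC * ICp = ICp := by
  have hdet : IU.det ≠ 0 := ne_of_gt hIU.det_pos
  have hinv : IU⁻¹ * IU = 1 := Matrix.nonsing_inv_mul IU (isUnit_iff_ne_zero.mpr hdet)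
  have hinv' : IU * IU⁻¹ = 1 := Matrix.mul_nonsing_inv IU (isUnit_iff_ne_zero.mpr hdet)
  have hsym : IUᵀ = IU := hIU.1.eq
  have hsyminv : (IU⁻¹)ᵀ = IU⁻¹ := by
    rw [Matrix.transpose_nonsing_inv, hsym]
  -- IU⁻¹ applied to ones gives θ
  have hθ1 : IU⁻¹ *ᵥ (fun _ => (1 : ℝ)) = θ := by
    rw [← hIUθ, Matrix.mulVec_mulVec, hinv, Matrix.one_mulVec]
  -- vecMul facts
  have hθIU : θ ᵥ* IU = fun _ => (1 : ℝ) := by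
    rw [← hIUθ]
    rw [show θ ᵥ* IU = IUᵀ *ᵥ θ from (Matrix.mulVec_transpose IU θ).symm, hsym]
  have h1inv : (fun _ => (1 : ℝ)) ᵥ* IU⁻¹ = θ := by
    rw [← hθ1]
    rw [show (fun _ => (1 : ℝ)) ᵥ* IU⁻¹ = (IU⁻¹)ᵀ *ᵥ (fun _ => (1:ℝ)) from
      (Matrix.mulVec_transpose IU⁻¹ _).symm, hsyminv]
  have hJ : (Matrix.of fun _ _ => (1 : ℝ) : Matrix (Fin d) (Fin d) ℝ) =
      Matrix.vecMulVec (fun _ => (1:ℝ)) (fun _ => (1:ℝ)) := by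
    ext i j; simp [Matrix.vecMulVec]
  have h1θ : (fun _ => (1 : ℝ)) ᵥ* Matrix.vecMulVec θ θ = θ := by
    ext j
    simp [Matrix.vecMul, Matrix.vecMulVec, dotProduct, ← Finset.sum_mul, hθsum]
  have hθθJ : θ ᵥ* (Matrix.vecMulVec (fun _ => (1:ℝ)) (fun _ => (1:ℝ)) : Matrix (Fin d) (Fin d) ℝ) = fun _ => (1:ℝ) := by
    ext j
    simp [Matrix.vecMul, Matrix.vecMulVec, dotProduct, hθsum]
  have hv0 : Matrix.vecMulVec θ (0 : Fin d → ℝ) = 0 := by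
    ext i j; simp [Matrix.vecMulVec]
  subst hIC hICp
  rw [hJ]
  have key1 : (IU⁻¹ - Matrix.vecMulVec θ θ) *
      (IU - Matrix.vecMulVec (fun _ => (1:ℝ)) (fun _ => (1:ℝ))) =
      1 - Matrix.vecMulVec θ (fun _ => (1:ℝ)) := by
    rw [Matrix.sub_mul, Matrix.mul_sub, hinv, my_mul_vecMulVec, hθ1, my_vecMulVec_mul,
      Matrix.vecMul_sub, hθIU, hθθJ, sub_self, hv0, sub_zero]
  have key2 : (1 - Matrix.vecMulVec θ (fun _ => (1:ℝ))) * (IU⁻¹ - Matrix.vecMulVec θ θ) =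
      IU⁻¹ - Matrix.vecMulVec θ θ := by
    rw [Matrix.sub_mul, Matrix.one_mul, my_vecMulVec_mul, Matrix.vecMul_sub, h1inv, h1θ,
      sub_self, hv0, sub_zero]
  rw [key1, key2]
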